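/- The cycle graph C_n on n ≥ 4 vertices has two disjoint total dominating sets if and only if n is divisible by 4. -/

import Mathlib

open SimpleGraph

/-- A diagonal (chord) of a convex `n`-gon with vertices `0, …, n-1` in cyclic order,
recorded as a pair `(i, j)` with `i < j`, joining two non-adjacent vertices. -/
def IsDiag (n : ℕ) (p : ℕ × ℕ) : Prop :=
  p.1 < p.2 ∧ p.2 < n ∧ 2 ≤ p.2 - p.1 ∧ p.2 - p.1 ≤ n - 2

/-- Two diagonals of a convex polygon cross (in their interiors). -/
def Crosses (p q : ℕ × ℕ) : Prop :=
  (p.1 < q.1 ∧ q.1 < p.2 ∧ p.2 < q.2) ∨ (q.1 < p.1 ∧ p.1 < q.2 ∧ q.2 < p.2)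

/-- A triangulation of a convex `n`-gon: `n - 3` pairwise non-crossing diagonals.
This is the standard combinatorial presentation of a maximal outerplanar graph on
`n` vertices (the polygon boundary is the outer Hamiltonian cycle). -/
structure PolyTriangulation (n : ℕ) where
  diags : Finset (ℕ × ℕ)
  isDiag : ∀ p ∈ diags, IsDiag n p
  noncross : ∀ p ∈ diags, ∀ q ∈ diags, ¬ Crosses p q
  card_eq : diags.card = n - 3

/-- The maximal outerplanar graph on `Fin n` given by a polygon triangulation:
the boundary Hamiltonian cycle `v_i v_{i+1}` together with the diagonals. -/
def PolyTriangulation.graph {n : ℕ} (T : PolyTriangulation n) : SimpleGraph (Fin n) :=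
  SimpleGraph.fromRel (fun i j =>
    (i.val + 1) % n = j.val ∨ (min i.val j.val, max i.val j.val) ∈ T.diags)

/-- `S` is a total dominating set of `G`: every vertex has a neighbor in `S`. -/
def IsTotalDom {V : Type*} (G : SimpleGraph V) (S : Set V) : Prop :=
  ∀ v, ∃ u ∈ S, G.Adj v u

/-- `G` has two disjoint total dominating sets (total domatic number at least 2). -/
def HasTwoTDS {V : Type*} (G : SimpleGraph V) : Prop :=
  ∃ S₁ S₂ : Set V, Disjoint S₁ S₂ ∧ IsTotalDom G S₁ ∧ IsTotalDom G S₂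

/-- The degree of a vertex in the maximal outerplanar graph of a triangulation. -/
noncomputable def pdeg {n : ℕ} (T : PolyTriangulation n) (v : Fin n) : ℕ :=
  (T.graph.neighborSet v).ncard

/-- A central vertex: no degree-2 vertex in its closed neighborhood, and indexing the
vertices cyclically starting from `v`, all neighbors of `v` have pairwise congruent
indices mod 4. -/
def IsCentral {n : ℕ} (T : PolyTriangulation n) (v : Fin n) : Prop :=
  (∀ u, (u = v ∨ T.graph.Adj v u) → pdeg T u ≠ 2) ∧
  (∀ u w, T.graph.Adj v u → T.graph.Adj v w →
    ((u.val + n - v.val) % n) % 4 = ((w.val + n - v.val) % n) % 4)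

/-- A generalized sun graph: a maximal outerplanar graph of order `n ≡ 2 (mod 4)`
in which the number of degree-2 vertices plus central vertices equals `n / 2`. -/
def IsGenSun {n : ℕ} (T : PolyTriangulation n) : Prop :=
  n % 4 = 2 ∧
  ({v : Fin n | pdeg T v = 2}.ncard + {v : Fin n | IsCentral T v}.ncard = n / 2)

open Fin.NatCast Fin.CommRing in
/-- The cycle `C_n`, `n ≥ 4`, has two disjoint total dominating sets
iff `4 ∣ n`. -/
theorem stmt2' (n : ℕ) (hn : 4 ≤ n) :
    (∃ S₁ S₂ : Set (Fin n), Disjoint S₁ S₂ ∧ (∀ v, ∃ u ∈ S₁, (cycleGraph n).Adj v u)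
      ∧ (∀ v, ∃ u ∈ S₂, (cycleGraph n).Adj v u)) ↔ 4 ∣ n := by
  haveI : NeZero n := ⟨by omega⟩
  have h1n : ((1 : Fin n) : ℕ) = 1 := by
    rw [Fin.val_one', Nat.mod_eq_of_lt (by omega)]
  have adjp : ∀ v : Fin n, (cycleGraph n).Adj v (v + 1) := by
    intro v
    rw [cycleGraph_adj']; right
    have h : (v + 1) - v = 1 := by ring
    rw [h, h1n]
  have adjm : ∀ v : Fin n, (cycleGraph n).Adj v (v - 1) := by
    intro v
    rw [cycleGraph_adj']; left
    have h : v - (v - 1) = 1 := by ring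
    rw [h, h1n]
  have valp : ∀ v : Fin n, ((v + 1 : Fin n) : ℕ) = (v.val + 1) % n := by
    intro v; rw [Fin.add_def]; simp [h1n]
  have valm : ∀ v : Fin n, ((v - 1 : Fin n) : ℕ) = (v.val + (n - 1)) % n := by
    intro v; rw [Fin.sub_def]; simp only [h1n]; simp [Nat.add_comm]
  constructor
  · rintro ⟨S₁, S₂, hdis, h1, h2⟩
    classical
    -- neighbors are exactly v+1 and v-1
    have hnbr : ∀ v u : Fin n, (cycleGraph n).Adj v u → u = v + 1 ∨ u = v - 1 := by
      intro v u h
      rw [cycleGraph_adj'] at h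
      rcases h with h | h
      · right
        have h3 : v - u = 1 := Fin.ext (by rw [h1n]; exact h)
        have h4 : v - (v - u) = v - 1 := by rw [h3]
        simpa using h4
      · left
        have h3 : u - v = 1 := Fin.ext (by rw [h1n]; exact h)
        exact (sub_eq_iff_eq_add.mp h3).trans (add_comm _ _)
    have hkey : ∀ v : Fin n, (v + 1 ∈ S₁ ∧ v - 1 ∈ S₂) ∨ (v - 1 ∈ S₁ ∧ v + 1 ∈ S₂) := by
      intro v
      obtain ⟨a, haS, haadj⟩ := h1 v
      obtain ⟨b, hbS, hbadj⟩ := h2 v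
      rcases hnbr v a haadj with ha | ha <;> rcases hnbr v b hbadj with hb | hb <;>
        subst ha <;> subst hb
      · exact absurd hbS (Set.disjoint_left.1 hdis haS)
      · exact Or.inl ⟨haS, hbS⟩
      · exact Or.inr ⟨haS, hbS⟩
      · exact absurd hbS (Set.disjoint_left.1 hdis haS)
    set f : Fin n → Bool := fun v => decide (v ∈ S₁) with hf
    have hflip : ∀ v : Fin n, f (v + 2) = ! f v := by
      intro v
      have hv2 : v + 1 + 1 = v + 2 := by ring
      have hv0 : v + 1 - 1 = v := by ring
      rcases hkey (v + 1) with ⟨ha, hb⟩ | ⟨ha, hb⟩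
      · rw [hv2] at ha; rw [hv0] at hb
        have hv : v ∉ S₁ := fun hv => Set.disjoint_left.1 hdis hv hb
        simp [hf, ha, hv]
      · rw [hv0] at ha; rw [hv2] at hb
        have hv : v + 2 ∉ S₁ := fun hv => Set.disjoint_left.1 hdis hv hb
        simp [hf, ha, hv]
    set g : ℕ → Bool := fun k => f ((2 * k : ℕ) : Fin n) with hgdef
    have hg : ∀ k, g (k + 1) = ! g k := by
      intro k
      have hcast : ((2 * (k + 1) : ℕ) : Fin n) = ((2 * k : ℕ) : Fin n) + 2 := by
        push_cast; ring
      simp only [hgdef, hcast, hflip]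
    have hgk : ∀ k, g k = if Even k then g 0 else ! g 0 := by
      intro k
      induction k with
      | zero => simp
      | succ k ih =>
        rw [hg, ih]
        by_cases h : Even k <;> simp [h, Nat.even_add_one]
    have hcastn : ∀ m : ℕ, n ∣ m → ((m : ℕ) : Fin n) = ((0 : ℕ) : Fin n) := by
      intro m hm
      simp [Fin.natCast_eq_zero.mpr hm]
    have heven : Even n := by
      have h2n : g n = g 0 := by
        simp only [hgdef]
        rw [show (2 * n : ℕ) = n * 2 by ring]
        congr 1
        rw [hcastn (n * 2) ⟨2, rfl⟩]
      rw [hgk n] at h2n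
      by_contra h
      simp [h] at h2n
    obtain ⟨m, hm⟩ := heven
    have hmg : g m = g 0 := by
      simp only [hgdef]
      congr 1
      rw [hcastn (2 * m) ⟨1, by omega⟩]
    rw [hgk m] at hmg
    have hem : Even m := by
      by_contra h
      simp [h] at hmg
    obtain ⟨r, hr⟩ := hem
    omega
  · intro hd
    refine ⟨{i | i.val % 4 = 0 ∨ i.val % 4 = 1}, {i | i.val % 4 = 2 ∨ i.val % 4 = 3}, ?_, ?_, ?_⟩
    · rw [Set.disjoint_left]
      intro a ha hb
      simp only [Set.mem_setOf_eq] at ha hb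
      omega
    · intro v
      have hmm : ∀ x : ℕ, x % n % 4 = x % 4 := fun x => Nat.mod_mod_of_dvd x hd
      by_cases h : v.val % 4 = 0 ∨ v.val % 4 = 3
      · refine ⟨v + 1, ?_, adjp v⟩
        simp only [Set.mem_setOf_eq]
        rw [valp v, hmm]
        omega
      · refine ⟨v - 1, ?_, adjm v⟩
        simp only [Set.mem_setOf_eq]
        rw [valm v, hmm]
        have := v.isLt
        omega
    · intro v
      have hmm : ∀ x : ℕ, x % n % 4 = x % 4 := fun x => Nat.mod_mod_of_dvd x hd
      by_cases h : v.val % 4 = 1 ∨ v.val % 4 = 2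
      · refine ⟨v + 1, ?_, adjp v⟩
        simp only [Set.mem_setOf_eq]
        rw [valp v, hmm]
        omega
      · refine ⟨v - 1, ?_, adjm v⟩
        simp only [Set.mem_setOf_eq]
        rw [valm v, hmm]
        have := v.isLt
        omega

theorem stmt2 (n : ℕ) (hn : 4 ≤ n) :
    HasTwoTDS (SimpleGraph.cycleGraph n) ↔ 4 ∣ n := stmt2' n hn
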